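/- Assume r0 : [0,π] → ℝ satisfies (H1) and (H2). Then there exists a constant C > 0 such that for all φ, ϕ ∈ [0,π]: C⁻¹·(φ − ϕ)² ≤ (r0(φ) − r0(ϕ))² + (cos φ − cos ϕ)² ≤ C·(φ − ϕ)². -/

import Mathlib

open Real Set

private lemma sin_ge_of_mem (t lo : ℝ) (hlo : 0 < lo) (h1 : lo ≤ t) (h2 : t ≤ π - lo) :
    2 / π * lo ≤ Real.sin t := by
  have hπ0 : (0:ℝ) < π := Real.pi_pos
  have h2π : (0:ℝ) < 2 / π := by positivity
  rcases le_total t (π / 2) with h | h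
  · calc 2 / π * lo ≤ 2 / π * t := by nlinarith
    _ ≤ Real.sin t := Real.mul_le_sin (by linarith) h
  · have h3 : π - t ≤ π / 2 := by linarith
    calc 2 / π * lo ≤ 2 / π * (π - t) := by nlinarith
    _ ≤ Real.sin (π - t) := Real.mul_le_sin (by linarith) h3
    _ = Real.sin t := Real.sin_pi_sub t

set_option maxHeartbeats 2000000 in
/-- Assume `r0 : [0,π] → ℝ` satisfies (H1) (it is C², vanishes at the endpoints and is
positive inside) and (H2) (`C0⁻¹ sin φ ≤ r0(φ) ≤ C0 sin φ`). Then there is `C > 0` such that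
for all `φ, ϕ ∈ [0,π]`:
`C⁻¹ (φ−ϕ)² ≤ (r0(φ)−r0(ϕ))² + (cos φ − cos ϕ)² ≤ C (φ−ϕ)²` (arc-chord estimate). -/
theorem stmt9 (r0 : ℝ → ℝ)
    (hC2 : ContDiffOn ℝ 2 r0 (Set.Icc 0 π))
    (h0 : r0 0 = 0) (hπ : r0 π = 0)
    (hpos : ∀ φ ∈ Set.Ioo (0:ℝ) π, 0 < r0 φ)
    (C0 : ℝ) (hC0 : 0 < C0)
    (hH2 : ∀ φ ∈ Set.Icc (0:ℝ) π, C0⁻¹ * Real.sin φ ≤ r0 φ ∧ r0 φ ≤ C0 * Real.sin φ) :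
    ∃ C > 0, ∀ φ ∈ Set.Icc 0 π, ∀ ϕ ∈ Set.Icc (0:ℝ) π,
      C⁻¹ * (φ - ϕ) ^ 2 ≤ (r0 φ - r0 ϕ) ^ 2 + (Real.cos φ - Real.cos ϕ) ^ 2 ∧
      (r0 φ - r0 ϕ) ^ 2 + (Real.cos φ - Real.cos ϕ) ^ 2 ≤ C * (φ - ϕ) ^ 2 := by
  have hπ0 : (0:ℝ) < π := Real.pi_pos
  set a := C0⁻¹ with ha
  have ha0 : 0 < a := inv_pos.2 hC0
  clear_value a
  have hUD : UniqueDiffOn ℝ (Icc (0:ℝ) π) := uniqueDiffOn_Icc hπ0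
  have hdiff : DifferentiableOn ℝ r0 (Icc 0 π) := hC2.differentiableOn two_ne_zero
  set g : ℝ → ℝ := fun x => derivWithin r0 (Icc 0 π) x with hg
  have hgc : ContinuousOn g (Icc 0 π) := hC2.continuousOn_derivWithin hUD one_le_two
  obtain ⟨M0, hM0⟩ := isCompact_Icc.exists_bound_of_continuousOn hgc
  have hMbound : ∀ x ∈ Icc (0:ℝ) π, ‖g x‖ ≤ max M0 0 := fun x hx =>
    (hM0 x hx).trans (le_max_left _ _)
  obtain ⟨M, hMdef⟩ : ∃ M : ℝ, M = max M0 0 := ⟨_, rfl⟩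
  have hMnn : (0:ℝ) ≤ M := hMdef ▸ le_max_right _ _
  rw [← hMdef] at hMbound
  -- Lipschitz bound for r0
  have hLip : ∀ x ∈ Icc (0:ℝ) π, ∀ y ∈ Icc (0:ℝ) π, |r0 y - r0 x| ≤ M * |y - x| := by
    intro x hx y hy
    have := Convex.norm_image_sub_le_of_norm_derivWithin_le hdiff hMbound
      (convex_Icc 0 π) hx hy
    simpa [Real.norm_eq_abs] using this
  -- Lipschitz bound for cos
  have hcosLip : ∀ x y : ℝ, |Real.cos x - Real.cos y| ≤ |x - y| := by
    intro x y
    rw [Real.cos_sub_cos]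
    have h1 : |Real.sin ((x + y) / 2)| ≤ 1 := Real.abs_sin_le_one _
    have h2 : |Real.sin ((x - y) / 2)| ≤ |(x - y) / 2| := Real.abs_sin_le_abs
    have h3 : |(-2) * Real.sin ((x + y) / 2) * Real.sin ((x - y) / 2)|
        = 2 * |Real.sin ((x + y) / 2)| * |Real.sin ((x - y) / 2)| := by
      rw [abs_mul, abs_mul]; norm_num
    rw [h3]
    have h4 : |(x - y) / 2| = |x - y| / 2 := by
      rw [abs_div]; norm_num
    rw [h4] at h2
    nlinarith [abs_nonneg (Real.sin ((x - y) / 2)), abs_nonneg (x - y),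
      abs_nonneg (Real.sin ((x + y) / 2))]
  -- upper bound
  have hupper : ∀ φ ∈ Icc (0:ℝ) π, ∀ ϕ ∈ Icc (0:ℝ) π,
      (r0 φ - r0 ϕ) ^ 2 + (Real.cos φ - Real.cos ϕ) ^ 2 ≤ (M ^ 2 + 1) * (φ - ϕ) ^ 2 := by
    intro φ hφ ϕ hϕ
    have h1 : |r0 φ - r0 ϕ| ≤ M * |φ - ϕ| := hLip ϕ hϕ φ hφ
    have h2 : |Real.cos φ - Real.cos ϕ| ≤ |φ - ϕ| := hcosLip φ ϕ
    have e1 : (r0 φ - r0 ϕ) ^ 2 ≤ (M * |φ - ϕ|) ^ 2 := by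
      rw [← sq_abs (r0 φ - r0 ϕ)]
      exact pow_le_pow_left₀ (abs_nonneg _) h1 2
    have e2 : (Real.cos φ - Real.cos ϕ) ^ 2 ≤ |φ - ϕ| ^ 2 := by
      rw [← sq_abs (Real.cos φ - Real.cos ϕ)]
      exact pow_le_pow_left₀ (abs_nonneg _) h2 2
    have e3 : |φ - ϕ| ^ 2 = (φ - ϕ) ^ 2 := sq_abs _
    rw [e3] at e2
    have e4 : (M * |φ - ϕ|) ^ 2 = M ^ 2 * (φ - ϕ) ^ 2 := by
      rw [mul_pow, sq_abs]
    rw [e4] at e1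
    nlinarith [sq_nonneg (φ - ϕ)]
  -- derivative at 0 is ≥ a
  have hg0 : a ≤ g 0 := by
    have hd : HasDerivWithinAt r0 (g 0) (Icc 0 π) 0 :=
      (hdiff 0 (left_mem_Icc.2 hπ0.le)).hasDerivWithinAt
    rw [hasDerivWithinAt_iff_tendsto_slope] at hd
    rw [show Icc (0:ℝ) π \ {0} = Ioc 0 π from Icc_diff_left,
      nhdsWithin_Ioc_eq_nhdsGT hπ0] at hd
    have hsin : Filter.Tendsto (fun x => a * Real.sin x / x) (nhdsWithin 0 (Ioi 0))
        (nhds a) := by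
      have h1 : Filter.Tendsto (fun x : ℝ => Real.sin x / x) (nhdsWithin 0 (Ioi 0)) (nhds 1) := by
        have hds := (Real.hasDerivAt_sin 0).hasDerivWithinAt (s := Ioi (0:ℝ))
        rw [Real.cos_zero, hasDerivWithinAt_iff_tendsto_slope,
          show Ioi (0:ℝ) \ {0} = Ioi 0 from diff_singleton_eq_self (notMem_Ioi.2 le_rfl)] at hds
        refine hds.congr fun x => ?_
        simp [slope_def_field]
      have h2 := h1.const_mul a
      simp only [mul_one] at h2
      refine h2.congr fun x => ?_
      rw [mul_div_assoc]
    refine le_of_tendsto_of_tendsto hsin hd ?_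
    have hIoc : Ioc (0:ℝ) π ∈ nhdsWithin (0:ℝ) (Ioi 0) := by
      rw [← nhdsWithin_Ioc_eq_nhdsGT hπ0]
      exact self_mem_nhdsWithin
    filter_upwards [hIoc] with x hx
    have hx0 : (0:ℝ) < x := hx.1
    have hr := (hH2 x ⟨hx0.le, hx.2⟩).1
    have hslope : slope r0 0 x = r0 x / x := by
      simp [slope_def_field, h0]
    rw [hslope, div_le_div_iff_of_pos_right hx0]
    exact hr
  -- derivative at π is ≤ -a
  have hgπ : g π ≤ -a := by
    have hd : HasDerivWithinAt r0 (g π) (Icc 0 π) π :=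
      (hdiff π (right_mem_Icc.2 hπ0.le)).hasDerivWithinAt
    rw [hasDerivWithinAt_iff_tendsto_slope] at hd
    rw [show Icc (0:ℝ) π \ {π} = Ico 0 π from Icc_sdiff_right,
      nhdsWithin_Ico_eq_nhdsLT hπ0] at hd
    have hsin : Filter.Tendsto (fun x => a * Real.sin x / (x - π)) (nhdsWithin π (Iio π))
        (nhds (-a)) := by
      have h1 : Filter.Tendsto (fun x : ℝ => Real.sin x / (x - π)) (nhdsWithin π (Iio π))
          (nhds (-1)) := by
        have hds := (Real.hasDerivAt_sin π).hasDerivWithinAt (s := Iio π)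
        rw [Real.cos_pi, hasDerivWithinAt_iff_tendsto_slope,
          show Iio π \ {π} = Iio π from diff_singleton_eq_self (notMem_Iio.2 le_rfl)] at hds
        refine hds.congr fun x => ?_
        simp [slope_def_field]
      have h2 := h1.const_mul a
      rw [mul_neg, mul_one] at h2
      refine h2.congr fun x => ?_
      rw [mul_div_assoc]
    refine le_of_tendsto_of_tendsto hd hsin ?_
    have hIco : Ico (0:ℝ) π ∈ nhdsWithin π (Iio π) := by
      rw [← nhdsWithin_Ico_eq_nhdsLT hπ0]
      exact self_mem_nhdsWithin
    filter_upwards [hIco] with x hx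
    have hxπ : x - π < 0 := by linarith [hx.2]
    have hr := (hH2 x ⟨hx.1, hx.2.le⟩).1
    have hslope : slope r0 π x = r0 x / (x - π) := by
      simp [slope_def_field, hπ]
    rw [hslope, div_le_div_right_of_neg hxπ]
    exact hr
  -- extract δ at the endpoints via continuity of g
  have hc0 : ContinuousWithinAt g (Icc 0 π) 0 := hgc 0 (left_mem_Icc.2 hπ0.le)
  have hev0 : {x | a / 2 < g x} ∈ nhdsWithin (0:ℝ) (Icc 0 π) :=
    hc0.eventually (eventually_gt_nhds (by linarith))
  rw [Metric.mem_nhdsWithin_iff] at hev0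
  obtain ⟨ε0, hε0, hb0⟩ := hev0
  have hcπ : ContinuousWithinAt g (Icc 0 π) π := hgc π (right_mem_Icc.2 hπ0.le)
  have hevπ : {x | g x < -(a / 2)} ∈ nhdsWithin π (Icc 0 π) :=
    hcπ.eventually (eventually_lt_nhds (by linarith))
  rw [Metric.mem_nhdsWithin_iff] at hevπ
  obtain ⟨ε1, hε1, hb1⟩ := hevπ
  obtain ⟨δ, hδdef⟩ : ∃ δ : ℝ, δ = min (min ε0 ε1) (π / 2) / 2 := ⟨_, rfl⟩
  have hmin0 : 0 < min (min ε0 ε1) (π / 2) := lt_min (lt_min hε0 hε1) (by positivity)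
  have hδ0 : 0 < δ := by rw [hδdef]; linarith
  have hδε0 : δ < ε0 := by
    have h1 : min (min ε0 ε1) (π / 2) ≤ ε0 := (min_le_left _ _).trans (min_le_left _ _)
    rw [hδdef]; linarith
  have hδε1 : δ < ε1 := by
    have h1 : min (min ε0 ε1) (π / 2) ≤ ε1 := (min_le_left _ _).trans (min_le_right _ _)
    rw [hδdef]; linarith
  have hδπ : δ ≤ π / 4 := by
    have h1 : min (min ε0 ε1) (π / 2) ≤ π / 2 := min_le_right _ _
    rw [hδdef]; linarith
  -- deriv bounds near endpoints, for the true deriv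
  have hderiv0 : ∀ x ∈ Ioo (0:ℝ) δ, a / 2 ≤ deriv r0 x := by
    intro x hx
    have hxIcc : x ∈ Icc (0:ℝ) π := ⟨hx.1.le, by linarith [hx.2, hδπ]⟩
    have hb : x ∈ Metric.ball (0:ℝ) ε0 := by
      rw [Metric.mem_ball, Real.dist_eq, sub_zero, abs_of_pos hx.1]
      linarith [hx.2]
    have hgx : a / 2 < g x := hb0 ⟨hb, hxIcc⟩
    have hnb : Icc (0:ℝ) π ∈ nhds x :=
      Icc_mem_nhds hx.1 (by linarith [hx.2, hδπ])
    have heq : g x = deriv r0 x := derivWithin_of_mem_nhds hnb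
    rw [heq] at hgx
    linarith
  have hderivπ : ∀ x ∈ Ioo (π - δ) π, deriv r0 x ≤ -(a / 2) := by
    intro x hx
    have hxIcc : x ∈ Icc (0:ℝ) π := ⟨by linarith [hx.1, hδπ], hx.2.le⟩
    have hb : x ∈ Metric.ball π ε1 := by
      rw [Metric.mem_ball, Real.dist_eq, abs_of_neg (by linarith [hx.2] : x - π < 0)]
      linarith [hx.1]
    have hgx : g x < -(a / 2) := hb1 ⟨hb, hxIcc⟩
    have hnb : Icc (0:ℝ) π ∈ nhds x :=
      Icc_mem_nhds (by linarith [hx.1, hδπ]) hx.2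
    have heq : g x = deriv r0 x := derivWithin_of_mem_nhds hnb
    rw [heq] at hgx
    linarith
  clear_value g
  -- MVT lower bounds near endpoints
  have hsub0 : Icc (0:ℝ) δ ⊆ Icc 0 π := Icc_subset_Icc le_rfl (by linarith)
  have hsubπ : Icc (π - δ) π ⊆ Icc 0 π := Icc_subset_Icc (by linarith) le_rfl
  have hdiffInt : ∀ x ∈ Ioo (0:ℝ) π, DifferentiableAt ℝ r0 x := by
    intro x hx
    exact (hdiff x (Ioo_subset_Icc_self hx)).differentiableAt (Icc_mem_nhds hx.1 hx.2)
  have key1 : ∀ x ∈ Icc (0:ℝ) δ, ∀ y ∈ Icc (0:ℝ) δ, x ≤ y →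
      a / 2 * (y - x) ≤ r0 y - r0 x := by
    refine (convex_Icc 0 δ).mul_sub_le_image_sub_of_le_deriv
      (hC2.continuousOn.mono hsub0) ?_ ?_
    · rw [interior_Icc]
      intro x hx
      exact (hdiffInt x ⟨hx.1, by linarith [hx.2, hδπ]⟩).differentiableWithinAt
    · rw [interior_Icc]
      exact hderiv0
  have key2 : ∀ x ∈ Icc (π - δ) π, ∀ y ∈ Icc (π - δ) π, x ≤ y →
      r0 y - r0 x ≤ -(a / 2) * (y - x) := by
    refine (convex_Icc (π - δ) π).image_sub_le_mul_sub_of_deriv_le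
      (hC2.continuousOn.mono hsubπ) ?_ ?_
    · rw [interior_Icc]
      intro x hx
      exact (hdiffInt x ⟨by linarith [hx.1, hδπ], hx.2⟩).differentiableWithinAt
    · rw [interior_Icc]
      exact hderivπ
  -- constants
  obtain ⟨c, hcdef⟩ : ∃ c : ℝ, c = min ((a / 2) ^ 2) ((2 * δ / π ^ 2) ^ 2) := ⟨_, rfl⟩
  have hc0' : 0 < c := by
    rw [hcdef]
    exact lt_min (by positivity) (pow_pos (div_pos (by linarith) (by positivity)) 2)
  have hc1 : c ≤ (a / 2) ^ 2 := hcdef ▸ min_le_left _ _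
  have hc2 : c ≤ (2 * δ / π ^ 2) ^ 2 := hcdef ▸ min_le_right _ _
  -- lower bound for ordered pairs
  have hlow : ∀ φ ∈ Icc (0:ℝ) π, ∀ ϕ ∈ Icc (0:ℝ) π, ϕ ≤ φ →
      c * (φ - ϕ) ^ 2 ≤ (r0 φ - r0 ϕ) ^ 2 + (Real.cos φ - Real.cos ϕ) ^ 2 := by
    intro φ hφ ϕ hϕ hle
    have hcos2 : (0:ℝ) ≤ (Real.cos φ - Real.cos ϕ) ^ 2 := sq_nonneg _
    have hr2 : (0:ℝ) ≤ (r0 φ - r0 ϕ) ^ 2 := sq_nonneg _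
    by_cases h1 : φ ≤ δ
    · -- both near 0
      have hmvt := key1 ϕ ⟨hϕ.1, hle.trans h1⟩ φ ⟨hφ.1, h1⟩ hle
      have hk0 : 0 ≤ a / 2 * (φ - ϕ) := mul_nonneg (by linarith) (by linarith)
      have hu2 : (a / 2 * (φ - ϕ)) ^ 2 ≤ (r0 φ - r0 ϕ) ^ 2 := by nlinarith
      nlinarith [sq_nonneg (φ - ϕ)]
    · by_cases h2 : π - δ ≤ ϕ
      · -- both near π
        have hmvt := key2 ϕ ⟨h2, hϕ.2⟩ φ ⟨by linarith, hφ.2⟩ hle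
        have hk0 : 0 ≤ a / 2 * (φ - ϕ) := mul_nonneg (by linarith) (by linarith)
        have hu2 : (a / 2 * (φ - ϕ)) ^ 2 ≤ (r0 φ - r0 ϕ) ^ 2 := by nlinarith
        nlinarith [sq_nonneg (φ - ϕ)]
      · -- middle case: use the cosine
        push_neg at h1 h2
        have hs1 : δ / 2 ≤ (φ + ϕ) / 2 := by linarith [hϕ.1]
        have hs2 : (φ + ϕ) / 2 ≤ π - δ / 2 := by linarith [hφ.2]
        have hsin_s : 2 / π * (δ / 2) ≤ Real.sin ((φ + ϕ) / 2) :=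
          sin_ge_of_mem _ (δ / 2) (by linarith) hs1 hs2
        have hd0 : 0 ≤ (φ - ϕ) / 2 := by linarith
        have hdπ : (φ - ϕ) / 2 ≤ π / 2 := by linarith [hφ.2, hϕ.1]
        have hsin_d : 2 / π * ((φ - ϕ) / 2) ≤ Real.sin ((φ - ϕ) / 2) :=
          Real.mul_le_sin hd0 hdπ
        have hcc : Real.cos φ - Real.cos ϕ
            = -2 * Real.sin ((φ + ϕ) / 2) * Real.sin ((φ - ϕ) / 2) :=
          Real.cos_sub_cos φ ϕ
        have hsd0 : 0 ≤ Real.sin ((φ - ϕ) / 2) :=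
          le_trans (mul_nonneg (by positivity) hd0) hsin_d
        have hss0 : 0 ≤ Real.sin ((φ + ϕ) / 2) :=
          le_trans (mul_nonneg (by positivity) (by linarith)) hsin_s
        have hprod : 2 * δ / π ^ 2 * (φ - ϕ)
            ≤ 2 * Real.sin ((φ + ϕ) / 2) * Real.sin ((φ - ϕ) / 2) := by
          have hmm := mul_le_mul hsin_s hsin_d (mul_nonneg (by positivity) hd0) hss0
          have heq : 2 * δ / π ^ 2 * (φ - ϕ)
              = 2 * (2 / π * (δ / 2) * (2 / π * ((φ - ϕ) / 2))) := by
            field_simp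
          rw [heq]
          nlinarith
        have hk0 : (0:ℝ) ≤ 2 * δ / π ^ 2 * (φ - ϕ) :=
          mul_nonneg (div_nonneg (by linarith) (by positivity)) (by linarith)
        have hP0 : 0 ≤ 2 * Real.sin ((φ + ϕ) / 2) * Real.sin ((φ - ϕ) / 2) :=
          mul_nonneg (mul_nonneg zero_le_two hss0) hsd0
        have hsq := mul_le_mul hprod hprod hk0 hP0
        have hcos_lb : (2 * δ / π ^ 2 * (φ - ϕ)) ^ 2 ≤ (Real.cos φ - Real.cos ϕ) ^ 2 := by
          rw [hcc]
          nlinarith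
        nlinarith [sq_nonneg (φ - ϕ)]
  -- combine
  have hCc : 0 < c⁻¹ := inv_pos.2 hc0'
  refine ⟨max c⁻¹ (M ^ 2 + 1), lt_of_lt_of_le hCc (le_max_left _ _), ?_⟩
  intro φ hφ ϕ hϕ
  have hCinv : (max c⁻¹ (M ^ 2 + 1))⁻¹ ≤ c := by
    calc (max c⁻¹ (M ^ 2 + 1))⁻¹ ≤ (c⁻¹)⁻¹ := inv_anti₀ hCc (le_max_left _ _)
      _ = c := inv_inv c
  constructor
  · have hsq : (0:ℝ) ≤ (φ - ϕ) ^ 2 := sq_nonneg _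
    have hmain : c * (φ - ϕ) ^ 2 ≤ (r0 φ - r0 ϕ) ^ 2 + (Real.cos φ - Real.cos ϕ) ^ 2 := by
      rcases le_total ϕ φ with h | h
      · exact hlow φ hφ ϕ hϕ h
      · have := hlow ϕ hϕ φ hφ h
        nlinarith
    nlinarith
  · have := hupper φ hφ ϕ hϕ
    have h2 : M ^ 2 + 1 ≤ max c⁻¹ (M ^ 2 + 1) := le_max_right _ _
    nlinarith [sq_nonneg (φ - ϕ)]
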